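/- Let δ, γ ∈ (−1, +∞) satisfy M(δ,γ) < 1 and additionally δ ≥ 0, and let Φ : [0,∞) → ℝ be the unique bounded real-analytic solution of problem (P) with 0 ≤ Φ ≤ 1. Then Φ is concave on [0,∞). -/

import Mathlib

open Real Filter Set

/-- The constant `M(δ,γ)` from the paper. -/
noncomputable def Mconst (δ γ : ℝ) : ℝ :=
  ((max 1 (1+δ)) ^ ((3:ℝ)/2) * (max 1 (1+γ)) ^ ((1:ℝ)/2) /
    ((min 1 (1+δ)) ^ ((5:ℝ)/2) * (min 1 (1+γ)) ^ ((1:ℝ)/2))) *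
  (2*|δ| + |δ-γ| * (max 1 (1+δ)) / ((min 1 (1+δ)) * (min 1 (1+γ))))

/-- `y` solves problem (P): `((1+δy)y')' + 2x(1+γy)y' = 0` on `(0,∞)`,
`y(0) = 0` and `y(x) → 1` as `x → ∞`. -/
def SolvesP (δ γ : ℝ) (y : ℝ → ℝ) : Prop :=
  (∀ x ∈ Set.Ioi (0:ℝ), DifferentiableAt ℝ y x) ∧
  (∀ x ∈ Set.Ioi (0:ℝ),
    HasDerivAt (fun t => (1 + δ * y t) * deriv y t)
      (-(2 * x * (1 + γ * y x) * deriv y x)) x) ∧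
  y 0 = 0 ∧ Tendsto y atTop (nhds 1)

/-- `y` is a bounded real-analytic function on `[0,∞)`. -/
def BddAnalytic (y : ℝ → ℝ) : Prop :=
  AnalyticOn ℝ y (Set.Ici 0) ∧ ∃ C : ℝ, ∀ x ≥ (0:ℝ), |y x| ≤ C

theorem modified_error_function_concave
    (δ γ : ℝ) (hδ : -1 < δ) (hγ : -1 < γ) (hM : Mconst δ γ < 1) (hδ0 : 0 ≤ δ)
    (Φ : ℝ → ℝ) (hΦa : BddAnalytic Φ) (hΦs : SolvesP δ γ Φ)
    (hΦb : ∀ x ≥ (0:ℝ), 0 ≤ Φ x ∧ Φ x ≤ 1) :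
    ConcaveOn ℝ (Set.Ici 0) Φ := by
  obtain ⟨hdiff, hODE, h0, hlim⟩ := hΦs
  -- positivity of the coefficients
  have hδpos : ∀ x ∈ Set.Ioi (0:ℝ), 0 < 1 + δ * Φ x := by
    intro x hx
    have hb := hΦb x (le_of_lt hx)
    nlinarith [hb.1, hb.2]
  have hγpos : ∀ x ∈ Set.Ioi (0:ℝ), 0 < 1 + γ * Φ x := by
    intro x hx
    have hb := hΦb x (le_of_lt hx)
    rcases le_or_gt 0 γ with h | h
    · nlinarith [hb.1]
    · nlinarith [hb.2]
  -- continuity of Φ on (0,∞)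
  have hcontΦ : ContinuousOn Φ (Set.Ioi (0:ℝ)) := fun x hx =>
    (hdiff x hx).continuousAt.continuousWithinAt
  -- the integrating factor data
  set h : ℝ → ℝ := fun x => 2 * x * (1 + γ * Φ x) / (1 + δ * Φ x) with hhdef
  have hconth : ContinuousOn h (Set.Ioi (0:ℝ)) := by
    apply ContinuousOn.div
    · exact (continuousOn_const.mul continuousOn_id).mul
        (continuousOn_const.add (continuousOn_const.mul hcontΦ))
    · exact continuousOn_const.add (continuousOn_const.mul hcontΦ)
    · intro x hx; exact ne_of_gt (hδpos x hx)
  set H : ℝ → ℝ := fun x => ∫ t in (1:ℝ)..x, h t with hHdef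
  have hH : ∀ x ∈ Set.Ioi (0:ℝ), HasDerivAt H (h x) x := by
    intro x hx
    apply intervalIntegral.integral_hasDerivAt_right
    · apply ContinuousOn.intervalIntegrable
      apply hconth.mono
      intro t ht
      rcases ht with ⟨h1, _⟩
      have : (0:ℝ) < min 1 x := lt_min one_pos hx
      exact lt_of_lt_of_le this h1
    · exact ⟨Set.Ioi 0, Ioi_mem_nhds hx,
        (hconth.aestronglyMeasurable measurableSet_Ioi)⟩
    · exact hconth.continuousAt (Ioi_mem_nhds hx)
  set g : ℝ → ℝ := fun x => (1 + δ * Φ x) * deriv Φ x with hgdef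
  have hg : ∀ x ∈ Set.Ioi (0:ℝ),
      HasDerivAt g (-(2 * x * (1 + γ * Φ x) * deriv Φ x)) x := hODE
  -- F := g · exp H  has zero derivative on (0,∞)
  set F : ℝ → ℝ := fun x => g x * Real.exp (H x) with hFdef
  have hF : ∀ x ∈ Set.Ioi (0:ℝ), HasDerivAt F 0 x := by
    intro x hx
    have h1 : HasDerivAt F _ x := (hg x hx).mul ((hH x hx).exp)
    convert h1 using 1
    have hd : (1 + δ * Φ x) ≠ 0 := ne_of_gt (hδpos x hx)
    simp only [hgdef, hhdef]
    have hc : (1 + δ * Φ x) * (2 * x * (1 + γ * Φ x) / (1 + δ * Φ x)) = 2 * x * (1 + γ * Φ x) := mul_div_cancel₀ _ hd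
    linear_combination (-(deriv Φ x * rexp (H x))) * hc
  -- F is constant on (0,∞)
  have hkey : ∀ a b : ℝ, 0 < a → a ≤ b → F b = F a := by
    intro a b ha hab
    have hcont : ContinuousOn F (Set.Icc a b) := by
      intro x hx
      exact ((hF x (lt_of_lt_of_le ha hx.1)).continuousAt).continuousWithinAt
    have hder : ∀ x ∈ Set.Ico a b, HasDerivWithinAt F 0 (Set.Ici x) x := by
      intro x hx
      exact (hF x (lt_of_lt_of_le ha hx.1)).hasDerivWithinAt
    exact constant_of_has_deriv_right_zero hcont hder b (Set.right_mem_Icc.mpr hab)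
  have hFconst : ∀ x ∈ Set.Ioi (0:ℝ), F x = F 1 := by
    intro x hx
    rcases le_total x 1 with hle | hle
    · exact (hkey x 1 hx hle).symm
    · exact hkey 1 x one_pos hle
  -- g has the sign of C := F 1
  have hgsign : ∀ x ∈ Set.Ioi (0:ℝ), g x * Real.exp (H x) = F 1 := hFconst
  -- rule out F 1 < 0
  have hCnonneg : 0 ≤ F 1 := by
    by_contra hC
    push_neg at hC
    have hderivneg : ∀ x ∈ Set.Ioi (0:ℝ), deriv Φ x < 0 := by
      intro x hx
      have h1 := hgsign x hx
      have h2 : g x < 0 := by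
        nlinarith [Real.exp_pos (H x), h1]
      have h3 := hδpos x hx
      by_contra hge
      push_neg at hge
      have : 0 ≤ g x := mul_nonneg (le_of_lt h3) hge
      linarith
    have hanti : StrictAntiOn Φ (Set.Ioi (0:ℝ)) := by
      apply strictAntiOn_of_deriv_neg (convex_Ioi 0) hcontΦ
      rwa [interior_Ioi]
    have h21 : Φ 2 < Φ 1 :=
      hanti (by norm_num) (by norm_num) (by norm_num)
    have h2le : (1:ℝ) ≤ Φ 2 := by
      apply le_of_tendsto hlim
      filter_upwards [eventually_ge_atTop (3:ℝ)] with y hy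
      exact le_of_lt (hanti (by norm_num) (Set.mem_Ioi.mpr (by linarith)) (by linarith))
    have := (hΦb 1 (by norm_num)).2
    linarith
  -- hence Φ' ≥ 0 on (0,∞)
  have hderivnn : ∀ x ∈ Set.Ioi (0:ℝ), 0 ≤ deriv Φ x := by
    intro x hx
    have h1 := hgsign x hx
    have h2 : 0 ≤ g x := by
      nlinarith [Real.exp_pos (H x)]
    have h3 := hδpos x hx
    exact (mul_nonneg_iff_of_pos_left h3).mp h2
  -- second derivative of Φ
  have hsecond : ∀ x ∈ Set.Ioi (0:ℝ), ∃ q' : ℝ,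
      HasDerivAt (deriv Φ) q' x ∧ q' ≤ 0 := by
    intro x hx
    have hd : 0 < 1 + δ * Φ x := hδpos x hx
    have hΦder : HasDerivAt (fun y => 1 + δ * Φ y) (δ * deriv Φ x) x :=
      ((hdiff x hx).hasDerivAt.const_mul δ).const_add 1
    have hinv : HasDerivAt (fun y => (1 + δ * Φ y)⁻¹)
        (-(δ * deriv Φ x) / (1 + δ * Φ x) ^ 2) x := hΦder.inv (ne_of_gt hd)
    have hq : HasDerivAt (fun y => g y * (1 + δ * Φ y)⁻¹)
        ((-(2 * x * (1 + γ * Φ x) * deriv Φ x)) * (1 + δ * Φ x)⁻¹ +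
          g x * (-(δ * deriv Φ x) / (1 + δ * Φ x) ^ 2)) x := (hg x hx).mul hinv
    have heq : deriv Φ =ᶠ[nhds x] (fun y => g y * (1 + δ * Φ y)⁻¹) := by
      filter_upwards [Ioi_mem_nhds hx] with y hy
      have hdy : (1 + δ * Φ y) ≠ 0 := ne_of_gt (hδpos y hy)
      simp only [hgdef]
      field_simp
    refine ⟨_, hq.congr_of_eventuallyEq heq, ?_⟩
    have hA : -(2 * x * (1 + γ * Φ x) * deriv Φ x) * (1 + δ * Φ x)⁻¹ ≤ 0 := by
      apply mul_nonpos_of_nonpos_of_nonneg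
      · have : 0 ≤ 2 * x * (1 + γ * Φ x) * deriv Φ x := by
          apply mul_nonneg
          apply mul_nonneg
          · linarith [le_of_lt (show (0:ℝ) < x from hx)]
          · exact le_of_lt (hγpos x hx)
          · exact hderivnn x hx
        linarith
      · exact le_of_lt (inv_pos.mpr hd)
    have hB : g x * (-(δ * deriv Φ x) / (1 + δ * Φ x) ^ 2) ≤ 0 := by
      apply mul_nonpos_of_nonneg_of_nonpos
      · exact mul_nonneg (le_of_lt hd) (hderivnn x hx)
      · apply div_nonpos_of_nonpos_of_nonneg
        · have : 0 ≤ δ * deriv Φ x := mul_nonneg hδ0 (hderivnn x hx)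
          linarith
        · positivity
    linarith
  -- conclude concavity
  apply concaveOn_of_deriv2_nonpos (convex_Ici 0) hΦa.1.continuousOn
  · rw [interior_Ici]
    exact fun x hx => (hdiff x hx).differentiableWithinAt
  · rw [interior_Ici]
    intro x hx
    obtain ⟨q', hq, _⟩ := hsecond x hx
    exact hq.differentiableAt.differentiableWithinAt
  · rw [interior_Ici]
    intro x hx
    obtain ⟨q', hq, hq0⟩ := hsecond x hx
    have : deriv^[2] Φ x = deriv (deriv Φ) x := by
      simp [Function.iterate_succ, Function.iterate_zero]
    rw [this, hq.deriv]
    exact hq0
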